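/- Let T > τ > 0, x₀ ∈ ℝ, ε > 0, α > 0, L > 0, M > 0, B > 0, let w : [0, T] → ℝ be continuous with w(0) = 0, and let S : ℝ × ℝ → ℝ be continuously differentiable with α ≤ S(t, y) ≤ B, |∂S/∂t(t, y)| ≤ M, |∂S/∂x(t, y)| ≤ L, and with |∂²S/∂t²|, |∂²S/∂t∂x|, |∂²S/∂x²| all bounded by M₂ on ℝ². Let x and X be continuous on ℝ, equal to x₀ on (−∞, 0], with x(t) = x₀ + ∫₀ᵗ S(s, x(s−τ)) ds and X(t) = x₀ + ∫₀ᵗ S(s, X(s−τ)) ds + ε w(t) on [0, T]. Let G : ℝ → ℝ be bounded, integrable, with G(u) = 0 for |u| ≥ 1, ∫_{−1}^{1} G(u) du = 1 and ∫_{−1}^{1} u G(u) du = 0. Suppose t₁, t₂ ∈ (τ, T) satisfy x(t₁ − τ) = X(t₂ − τ), t₁ − τ ≠ τ and t₂ − τ ≠ τ, and φ > 0 satisfies t₂ − φ ≥ 2τ and t₂ + φ ≤ T. Then there exists a constant C > 0 depending only on T, τ, α, L, M, B, M₂ and G such that | (1/φ) ∫₀ᵀ G((s − t₂)/φ) S(s,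 X(s−τ)) ds − S(t₁, x(t₁ − τ)) | ≤ C ( φ² + ε sup_{0 ≤ s ≤ T} |w(s)| ). -/

import Mathlib

set_option maxHeartbeats 1000000

open MeasureTheory Set Real


section DerivAux

variable {S : ℝ → ℝ → ℝ}

lemma aux_hasDerivAt_fst (hS : Differentiable ℝ (fun p : ℝ × ℝ => S p.1 p.2)) (t y : ℝ) :
    HasDerivAt (fun a => S a y) ((fderiv ℝ (fun p : ℝ × ℝ => S p.1 p.2) (t, y)) (1, 0)) t := by
  have h := (hS (t, y)).hasFDerivAt.comp_hasDerivAt t ((hasDerivAt_id t).prodMk (hasDerivAt_const t y))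
  exact h

lemma aux_hasDerivAt_snd (hS : Differentiable ℝ (fun p : ℝ × ℝ => S p.1 p.2)) (t y : ℝ) :
    HasDerivAt (fun b => S t b) ((fderiv ℝ (fun p : ℝ × ℝ => S p.1 p.2) (t, y)) (0, 1)) y :=
  (hS (t, y)).hasFDerivAt.comp_hasDerivAt y ((hasDerivAt_const y t).prodMk (hasDerivAt_id y))

lemma aux_hasDerivAt2_fst {F : ℝ × ℝ → (ℝ × ℝ) →L[ℝ] ℝ} (hF : Differentiable ℝ F)
    (t y : ℝ) (v : ℝ × ℝ) :
    HasDerivAt (fun a => F (a, y) v) ((fderiv ℝ F (t, y)) (1, 0) v) t := by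
  have h1 : HasDerivAt (fun a : ℝ => F (a, y)) ((fderiv ℝ F (t, y)) (1, 0)) t :=
    (hF (t, y)).hasFDerivAt.comp_hasDerivAt t ((hasDerivAt_id t).prodMk (hasDerivAt_const t y))
  simpa using h1.clm_apply (hasDerivAt_const t v)

lemma aux_hasDerivAt2_snd {F : ℝ × ℝ → (ℝ × ℝ) →L[ℝ] ℝ} (hF : Differentiable ℝ F)
    (t y : ℝ) (v : ℝ × ℝ) :
    HasDerivAt (fun b => F (t, b) v) ((fderiv ℝ F (t, y)) (0, 1) v) y := by
  have h1 : HasDerivAt (fun b : ℝ => F (t, b)) ((fderiv ℝ F (t, y)) (0, 1)) y :=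
    (hF (t, y)).hasFDerivAt.comp_hasDerivAt y ((hasDerivAt_const y t).prodMk (hasDerivAt_id y))
  simpa using h1.clm_apply (hasDerivAt_const y v)

lemma aux_lipT (hS : Differentiable ℝ (fun p : ℝ × ℝ => S p.1 p.2)) {M : ℝ}
    (h5 : ∀ t y : ℝ, |deriv (fun a => S a y) t| ≤ M) (t t' y : ℝ) :
    |S t y - S t' y| ≤ M * |t - t'| := by
  have := Convex.norm_image_sub_le_of_norm_deriv_le (f := fun a => S a y)
    (fun z _ => (aux_hasDerivAt_fst hS z y).differentiableAt)
    (fun z _ => by simpa using h5 z y) convex_univ (mem_univ t') (mem_univ t)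
  simpa using this

lemma aux_lipY (hS : Differentiable ℝ (fun p : ℝ × ℝ => S p.1 p.2)) {L : ℝ}
    (h6 : ∀ t y : ℝ, |deriv (fun b => S t b) y| ≤ L) (t y y' : ℝ) :
    |S t y - S t y'| ≤ L * |y - y'| := by
  have := Convex.norm_image_sub_le_of_norm_deriv_le (f := fun b => S t b)
    (fun z _ => (aux_hasDerivAt_snd hS t z).differentiableAt)
    (fun z _ => by simpa using h6 t z) convex_univ (mem_univ y') (mem_univ y)
  simpa using this

end DerivAux

section SecondDeriv

variable {S : ℝ → ℝ → ℝ} {M₂ : ℝ}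


lemma aux_prod2 {a b a' b' : ℝ} (ha : |a| ≤ a') (hb : |b| ≤ b') : |a * b| ≤ a' * b' := by
  rw [abs_mul]
  exact mul_le_mul ha hb (abs_nonneg b) ((abs_nonneg a).trans ha)

lemma aux_prod3 {a b c a' b' c' : ℝ} (ha : |a| ≤ a') (hb : |b| ≤ b') (hc : |c| ≤ c') :
    |a * b * c| ≤ a' * b' * c' := by
  rw [abs_mul]
  exact mul_le_mul (aux_prod2 ha hb) hc (abs_nonneg c)
    (mul_nonneg ((abs_nonneg a).trans ha) ((abs_nonneg b).trans hb))

/-- Decomposition of a vector in `ℝ × ℝ`. -/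
lemma aux_vec_decomp (v : ℝ × ℝ) :
    v = v.1 • ((1 : ℝ), (0 : ℝ)) + v.2 • ((0 : ℝ), (1 : ℝ)) := by
  ext <;> simp

lemma aux_sndfderiv_entries (hS : ContDiff ℝ 2 (fun p : ℝ × ℝ => S p.1 p.2))
    (h11 : ∀ t y : ℝ, |deriv (deriv (fun a => S a y)) t| ≤ M₂)
    (h12 : ∀ t y : ℝ, |deriv (fun a => deriv (fun b => S a b) y) t| ≤ M₂)
    (h22 : ∀ t y : ℝ, |deriv (deriv (fun b => S t b)) y| ≤ M₂)
    (t y : ℝ) :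
    |fderiv ℝ (fderiv ℝ (fun p : ℝ × ℝ => S p.1 p.2)) (t, y) (1, 0) (1, 0)| ≤ M₂ ∧
    |fderiv ℝ (fderiv ℝ (fun p : ℝ × ℝ => S p.1 p.2)) (t, y) (1, 0) (0, 1)| ≤ M₂ ∧
    |fderiv ℝ (fderiv ℝ (fun p : ℝ × ℝ => S p.1 p.2)) (t, y) (0, 1) (1, 0)| ≤ M₂ ∧
    |fderiv ℝ (fderiv ℝ (fun p : ℝ × ℝ => S p.1 p.2)) (t, y) (0, 1) (0, 1)| ≤ M₂ := by
  have hFd : Differentiable ℝ (fun p : ℝ × ℝ => S p.1 p.2) := hS.differentiable two_ne_zero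
  have hAd : Differentiable ℝ (fderiv ℝ (fun p : ℝ × ℝ => S p.1 p.2)) :=
    (hS.fderiv_right (m := 1) (by norm_num)).differentiable one_ne_zero
  have e1 : ∀ y' : ℝ, deriv (fun a => S a y') =
      fun s => fderiv ℝ (fun p : ℝ × ℝ => S p.1 p.2) (s, y') (1, 0) :=
    fun y' => funext fun s => (aux_hasDerivAt_fst hFd s y').deriv
  have e2 : ∀ t' : ℝ, deriv (fun b => S t' b) =
      fun z => fderiv ℝ (fun p : ℝ × ℝ => S p.1 p.2) (t', z) (0, 1) :=
    fun t' => funext fun z => (aux_hasDerivAt_snd hFd t' z).deriv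
  refine ⟨?_, ?_, ?_, ?_⟩
  · have h := h11 t y
    rwa [e1 y, (aux_hasDerivAt2_fst hAd t y (1, 0)).deriv] at h
  · have h := h12 t y
    have e3 : (fun a => deriv (fun b => S a b) y) =
        fun a => fderiv ℝ (fun p : ℝ × ℝ => S p.1 p.2) (a, y) (0, 1) :=
      funext fun a => (aux_hasDerivAt_snd hFd a y).deriv
    rwa [e3, (aux_hasDerivAt2_fst hAd t y (0, 1)).deriv] at h
  · -- symmetry of second derivative
    have hsymm := second_derivative_symmetric (f := fun p : ℝ × ℝ => S p.1 p.2)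
      (fun p => (hFd p).hasFDerivAt) ((hAd (t, y)).hasFDerivAt)
      ((0 : ℝ), (1 : ℝ)) ((1 : ℝ), (0 : ℝ))
    rw [hsymm]
    have h := h12 t y
    have e3 : (fun a => deriv (fun b => S a b) y) =
        fun a => fderiv ℝ (fun p : ℝ × ℝ => S p.1 p.2) (a, y) (0, 1) :=
      funext fun a => (aux_hasDerivAt_snd hFd a y).deriv
    rwa [e3, (aux_hasDerivAt2_fst hAd t y (0, 1)).deriv] at h
  · have h := h22 t y
    rwa [e2 t, (aux_hasDerivAt2_snd hAd t y (0, 1)).deriv] at h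

lemma aux_sndfderiv_opnorm (hS : ContDiff ℝ 2 (fun p : ℝ × ℝ => S p.1 p.2))
    (h11 : ∀ t y : ℝ, |deriv (deriv (fun a => S a y)) t| ≤ M₂)
    (h12 : ∀ t y : ℝ, |deriv (fun a => deriv (fun b => S a b) y) t| ≤ M₂)
    (h22 : ∀ t y : ℝ, |deriv (deriv (fun b => S t b)) y| ≤ M₂)
    (p : ℝ × ℝ) :
    ‖fderiv ℝ (fderiv ℝ (fun p : ℝ × ℝ => S p.1 p.2)) p‖ ≤ 4 * |M₂| := by
  obtain ⟨E11, E12, E21, E22⟩ := aux_sndfderiv_entries hS h11 h12 h22 p.1 p.2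
  have hp : ((p.1, p.2) : ℝ × ℝ) = p := rfl
  rw [hp] at E11 E12 E21 E22
  refine ContinuousLinearMap.opNorm_le_bound _ (by positivity) (fun v => ?_)
  refine ContinuousLinearMap.opNorm_le_bound _ (by positivity) (fun w => ?_)
  set A2 := fderiv ℝ (fderiv ℝ (fun p : ℝ × ℝ => S p.1 p.2)) p with hA2
  have hexp : A2 v w = v.1 * w.1 * (A2 (1, 0) (1, 0)) + v.1 * w.2 * (A2 (1, 0) (0, 1))
      + v.2 * w.1 * (A2 (0, 1) (1, 0)) + v.2 * w.2 * (A2 (0, 1) (0, 1)) := by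
    conv_lhs => rw [aux_vec_decomp v, aux_vec_decomp w]
    simp only [map_add, _root_.map_smul, ContinuousLinearMap.add_apply,
      ContinuousLinearMap.coe_smul', Pi.smul_apply, smul_eq_mul]
    ring
  rw [Real.norm_eq_abs, hexp]
  have hv1 : |v.1| ≤ ‖v‖ := by simpa using norm_fst_le v
  have hv2 : |v.2| ≤ ‖v‖ := by simpa using norm_snd_le v
  have hw1 : |w.1| ≤ ‖w‖ := by simpa using norm_fst_le w
  have hw2 : |w.2| ≤ ‖w‖ := by simpa using norm_snd_le w
  have hM : |M₂| ≥ 0 := abs_nonneg _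
  have b11 : |v.1 * w.1 * (A2 (1, 0) (1, 0))| ≤ ‖v‖ * ‖w‖ * |M₂| :=
    aux_prod3 hv1 hw1 (E11.trans (le_abs_self _))
  have b12 : |v.1 * w.2 * (A2 (1, 0) (0, 1))| ≤ ‖v‖ * ‖w‖ * |M₂| :=
    aux_prod3 hv1 hw2 (E12.trans (le_abs_self _))
  have b21 : |v.2 * w.1 * (A2 (0, 1) (1, 0))| ≤ ‖v‖ * ‖w‖ * |M₂| :=
    aux_prod3 hv2 hw1 (E21.trans (le_abs_self _))
  have b22 : |v.2 * w.2 * (A2 (0, 1) (0, 1))| ≤ ‖v‖ * ‖w‖ * |M₂| :=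
    aux_prod3 hv2 hw2 (E22.trans (le_abs_self _))
  calc |v.1 * w.1 * (A2 (1, 0) (1, 0)) + v.1 * w.2 * (A2 (1, 0) (0, 1))
      + v.2 * w.1 * (A2 (0, 1) (1, 0)) + v.2 * w.2 * (A2 (0, 1) (0, 1))|
      ≤ |v.1 * w.1 * (A2 (1, 0) (1, 0)) + v.1 * w.2 * (A2 (1, 0) (0, 1))
        + v.2 * w.1 * (A2 (0, 1) (1, 0))| + |v.2 * w.2 * (A2 (0, 1) (0, 1))| := abs_add_le _ _
    _ ≤ (|v.1 * w.1 * (A2 (1, 0) (1, 0)) + v.1 * w.2 * (A2 (1, 0) (0, 1))|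
        + |v.2 * w.1 * (A2 (0, 1) (1, 0))|) + |v.2 * w.2 * (A2 (0, 1) (0, 1))| := by
        gcongr; exact abs_add_le _ _
    _ ≤ ((|v.1 * w.1 * (A2 (1, 0) (1, 0))| + |v.1 * w.2 * (A2 (1, 0) (0, 1))|)
        + |v.2 * w.1 * (A2 (0, 1) (1, 0))|) + |v.2 * w.2 * (A2 (0, 1) (0, 1))| := by
        gcongr; exact abs_add_le _ _
    _ ≤ ‖v‖ * ‖w‖ * |M₂| + ‖v‖ * ‖w‖ * |M₂| + ‖v‖ * ‖w‖ * |M₂| + ‖v‖ * ‖w‖ * |M₂| := by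
        linarith
    _ = 4 * |M₂| * ‖v‖ * ‖w‖ := by ring

lemma aux_fderiv_lip (hS : ContDiff ℝ 2 (fun p : ℝ × ℝ => S p.1 p.2))
    (h11 : ∀ t y : ℝ, |deriv (deriv (fun a => S a y)) t| ≤ M₂)
    (h12 : ∀ t y : ℝ, |deriv (fun a => deriv (fun b => S a b) y) t| ≤ M₂)
    (h22 : ∀ t y : ℝ, |deriv (deriv (fun b => S t b)) y| ≤ M₂)
    (p q : ℝ × ℝ) :
    ‖fderiv ℝ (fun p : ℝ × ℝ => S p.1 p.2) p - fderiv ℝ (fun p : ℝ × ℝ => S p.1 p.2) q‖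
      ≤ 4 * |M₂| * ‖p - q‖ := by
  have hAd : Differentiable ℝ (fderiv ℝ (fun p : ℝ × ℝ => S p.1 p.2)) :=
    (hS.fderiv_right (m := 1) (by norm_num)).differentiable one_ne_zero
  exact Convex.norm_image_sub_le_of_norm_fderiv_le (fun z _ => hAd z)
    (fun z _ => aux_sndfderiv_opnorm hS h11 h12 h22 z) convex_univ (mem_univ q) (mem_univ p)

lemma aux_fderiv_opnorm (hS : ContDiff ℝ 2 (fun p : ℝ × ℝ => S p.1 p.2)) {M L : ℝ}
    (h5 : ∀ t y : ℝ, |deriv (fun a => S a y) t| ≤ M)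
    (h6 : ∀ t y : ℝ, |deriv (fun b => S t b) y| ≤ L)
    (p : ℝ × ℝ) :
    ‖fderiv ℝ (fun p : ℝ × ℝ => S p.1 p.2) p‖ ≤ |M| + |L| := by
  have hFd : Differentiable ℝ (fun p : ℝ × ℝ => S p.1 p.2) := hS.differentiable two_ne_zero
  refine ContinuousLinearMap.opNorm_le_bound _ (by positivity) (fun w => ?_)
  set A := fderiv ℝ (fun p : ℝ × ℝ => S p.1 p.2) p with hA
  have hexp : A w = w.1 * (A (1, 0)) + w.2 * (A (0, 1)) := by
    conv_lhs => rw [aux_vec_decomp w]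
    simp only [map_add, _root_.map_smul, smul_eq_mul]
  have e1 : |A (1, 0)| ≤ M := by
    have h := h5 p.1 p.2
    rwa [(aux_hasDerivAt_fst hFd p.1 p.2).deriv] at h
  have e2 : |A (0, 1)| ≤ L := by
    have h := h6 p.1 p.2
    rwa [(aux_hasDerivAt_snd hFd p.1 p.2).deriv] at h
  have hw1 : |w.1| ≤ ‖w‖ := by simpa using norm_fst_le w
  have hw2 : |w.2| ≤ ‖w‖ := by simpa using norm_snd_le w
  rw [Real.norm_eq_abs, hexp]
  calc |w.1 * A (1, 0) + w.2 * A (0, 1)| ≤ |w.1 * A (1, 0)| + |w.2 * A (0, 1)| := abs_add_le _ _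
    _ = |w.1| * |A (1, 0)| + |w.2| * |A (0, 1)| := by rw [abs_mul, abs_mul]
    _ ≤ ‖w‖ * |M| + ‖w‖ * |L| := by
        have u1 := aux_prod2 hw1 (e1.trans (le_abs_self _))
        have u2 := aux_prod2 hw2 (e2.trans (le_abs_self _))
        rw [abs_mul] at u1 u2
        linarith
    _ = (|M| + |L|) * ‖w‖ := by ring

end SecondDeriv

section Gronwall

open intervalIntegral

/-- Grönwall-type estimate from an integral inequality. -/
lemma aux_gronwall {L c T : ℝ} (hL : 0 < L) (hc : 0 ≤ c) (hT : 0 ≤ T)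
    {D : ℝ → ℝ} (hDc : Continuous D) (hDnn : ∀ t, 0 ≤ D t)
    (hbound : ∀ t ∈ Icc (0 : ℝ) T, D t ≤ L * (∫ s in (0 : ℝ)..t, D s) + c) :
    ∀ t ∈ Icc (0 : ℝ) T, D t ≤ c * Real.exp (L * T) := by
  set u : ℝ → ℝ := fun t => ∫ s in (0 : ℝ)..t, D s with hu
  have hu' : ∀ t : ℝ, HasDerivAt u (D t) t := fun t =>
    (hDc.integral_hasStrictDerivAt 0 t).hasDerivAt
  have huc : Continuous u := by
    refine continuous_iff_continuousAt.mpr fun t => (hu' t).continuousAt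
  have hunn : ∀ t, 0 ≤ t → 0 ≤ u t := fun t ht =>
    intervalIntegral.integral_nonneg ht fun s _ => hDnn s
  have hgron := norm_le_gronwallBound_of_norm_deriv_right_le (f := u) (f' := D)
    (δ := 0) (K := L) (ε := c) (a := 0) (b := T) huc.continuousOn
    (fun t _ => (hu' t).hasDerivWithinAt)
    (by simp [hu])
    (fun t ht => by
      rw [Real.norm_eq_abs, Real.norm_eq_abs, abs_of_nonneg (hDnn t),
        abs_of_nonneg (hunn t ht.1)]
      exact hbound t ⟨ht.1, ht.2.le⟩)
  intro t ht
  have h1 := hgron t ht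
  rw [Real.norm_eq_abs, abs_of_nonneg (hunn t ht.1), sub_zero,
    gronwallBound_of_K_ne_0 hL.ne'] at h1
  have h2 := hbound t ht
  have h3 : Real.exp (L * t) ≤ Real.exp (L * T) :=
    Real.exp_le_exp.mpr (mul_le_mul_of_nonneg_left ht.2 hL.le)
  have h4 : (0 : ℝ) < Real.exp (L * t) := Real.exp_pos _
  have h5 : L * u t ≤ L * ((0 : ℝ) * Real.exp (L * t) + c / L * (Real.exp (L * t) - 1)) :=
    mul_le_mul_of_nonneg_left h1 hL.le
  have h6 : L * (c / L * (Real.exp (L * t) - 1)) = c * (Real.exp (L * t) - 1) := by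
    field_simp
  nlinarith [mul_le_mul_of_nonneg_left h3 hc]

end Gronwall

section Affine

open intervalIntegral MeasureTheory

lemma aux_affine_intervalIntegrable (G : ℝ → ℝ) (hG : Integrable G) {φ : ℝ} (hφ : φ ≠ 0)
    (t₂ c d : ℝ) : IntervalIntegrable (fun s => G ((s - t₂) / φ)) volume c d := by
  have h0 : IntervalIntegrable G volume ((c - t₂) * φ⁻¹) ((d - t₂) * φ⁻¹) :=
    hG.intervalIntegrable
  have h1 : IntervalIntegrable (fun r => G (r * φ⁻¹)) volume
      (((c - t₂) * φ⁻¹) / φ⁻¹) (((d - t₂) * φ⁻¹) / φ⁻¹) := h0.comp_mul_right (c := φ⁻¹)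
  have h1' : IntervalIntegrable (fun r => G (r * φ⁻¹)) volume (c - t₂) (d - t₂) := by
    have e1 : (c - t₂) * φ⁻¹ / φ⁻¹ = c - t₂ := by field_simp
    have e2 : (d - t₂) * φ⁻¹ / φ⁻¹ = d - t₂ := by field_simp
    rwa [e1, e2] at h1
  have h2 := h1'.comp_sub_right t₂
  have e3 : c - t₂ + t₂ = c := by ring
  have e4 : d - t₂ + t₂ = d := by ring
  rw [e3, e4] at h2
  have : (fun s => G ((s - t₂) / φ)) = fun s => G ((s - t₂) * φ⁻¹) := by
    funext s; rw [div_eq_mul_inv]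
  rw [this]
  exact h2

end Affine


/-- Deterministic (drift) part of the error decomposition (3.15) in the proof of
Theorem 3.1: there is a constant `C > 0` depending only on `T, τ, α, L, M, B, M₂` and the
kernel `G` such that, whenever the hitting times `t₁` (for the deterministic solution `x`)
and `t₂` (for the perturbed solution `X`) correspond to the same level, the kernel average
at `t₂` of the drift `s ↦ S(s, X(s-τ))` differs from `S(t₁, x(t₁-τ))` by at most
`C (φ² + ε sup_{0≤s≤T} |w(s)|)`. -/
theorem kernel_estimator_drift_part_bound
    (T τ α L M B M₂ : ℝ) (hτ : 0 < τ) (hT : τ < T)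
    (hα : 0 < α) (hL : 0 < L) (hM : 0 < M) (hB : 0 < B)
    (G : ℝ → ℝ) (hGbdd : ∃ K : ℝ, ∀ u, |G u| ≤ K)
    (hGint : MeasureTheory.Integrable G)
    (hGsupp : ∀ u : ℝ, 1 ≤ |u| → G u = 0)
    (hG1 : (∫ u in (-1:ℝ)..1, G u) = 1)
    (hG2 : (∫ u in (-1:ℝ)..1, u * G u) = 0) :
    ∃ C : ℝ, 0 < C ∧
      ∀ (x₀ ε : ℝ) (w : ℝ → ℝ) (S : ℝ → ℝ → ℝ) (x X : ℝ → ℝ) (t₁ t₂ φ : ℝ),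
        0 < ε →
        ContinuousOn w (Set.Icc 0 T) → w 0 = 0 →
        ContDiff ℝ 2 (fun p : ℝ × ℝ => S p.1 p.2) →
        (∀ t y : ℝ, α ≤ S t y) → (∀ t y : ℝ, S t y ≤ B) →
        (∀ t y : ℝ, |deriv (fun a => S a y) t| ≤ M) →
        (∀ t y : ℝ, |deriv (fun b => S t b) y| ≤ L) →
        (∀ t y : ℝ, |deriv (deriv (fun a => S a y)) t| ≤ M₂) →
        (∀ t y : ℝ, |deriv (fun a => deriv (fun b => S a b) y) t| ≤ M₂) →
        (∀ t y : ℝ, |deriv (deriv (fun b => S t b)) y| ≤ M₂) →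
        Continuous x → Continuous X →
        (∀ s ≤ (0:ℝ), x s = x₀) → (∀ s ≤ (0:ℝ), X s = x₀) →
        (∀ t ∈ Set.Icc (0:ℝ) T, x t = x₀ + ∫ s in (0:ℝ)..t, S s (x (s - τ))) →
        (∀ t ∈ Set.Icc (0:ℝ) T,
          X t = x₀ + (∫ s in (0:ℝ)..t, S s (X (s - τ))) + ε * w t) →
        t₁ ∈ Set.Ioo τ T → t₂ ∈ Set.Ioo τ T →
        x (t₁ - τ) = X (t₂ - τ) →
        t₁ - τ ≠ τ → t₂ - τ ≠ τ →
        0 < φ → 2 * τ ≤ t₂ - φ → t₂ + φ ≤ T →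
        |(1 / φ) * (∫ s in (0:ℝ)..T, G ((s - t₂) / φ) * S s (X (s - τ))) -
            S t₁ (x (t₁ - τ))| ≤
          C * (φ ^ 2 + ε * ⨆ s : Set.Icc (0:ℝ) T, |w s.1|) := by
  obtain ⟨K, hK⟩ := hGbdd
  have hΓ0 : (0:ℝ) ≤ ∫ u in (-1:ℝ)..1, |G u| :=
    intervalIntegral.integral_nonneg (by norm_num) (fun u _ => abs_nonneg _)
  set Γ : ℝ := ∫ u in (-1:ℝ)..1, |G u| with hΓdef
  set EE : ℝ := Real.exp (L * T) with hEEdef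
  set Kg : ℝ := 4 * |M₂| * (1 + B) ^ 2 + (M + L) * (M + L * B) with hKgdef
  clear_value Γ EE Kg
  have hEE : 0 < EE := by rw [hEEdef]; exact Real.exp_pos _
  have hKg0 : 0 ≤ Kg := by
    rw [hKgdef]
    have h1 : (0:ℝ) ≤ 4 * |M₂| * (1 + B) ^ 2 := by positivity
    nlinarith [mul_pos (show (0:ℝ) < M + L by linarith)
      (show (0:ℝ) < M + L * B by nlinarith)]
  have hMα : 0 < M / α + L := by positivity
  refine ⟨Γ * (L * EE) + Γ * Kg + (M / α + L) * EE + 1, by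
    nlinarith [mul_nonneg hΓ0 (mul_nonneg hL.le hEE.le), mul_nonneg hΓ0 hKg0,
      mul_pos hMα hEE], ?_⟩
  intro x₀ ε w S x X t₁ t₂ φ hε hw hw0 hS2 hSα hSB h5 h6 h11 h12 h22 hx hX hx0 hX0
    hxeq hXeq ht₁ ht₂ hlevel hne1 hne2 hφ hφl hφr
  -- ## basic setup
  have hM₂0 : 0 ≤ M₂ := (abs_nonneg _).trans (h11 0 0)
  have hT0 : (0:ℝ) ≤ T := by linarith
  set W : ℝ := ⨆ s : Set.Icc (0:ℝ) T, |w s.1| with hWdef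
  clear_value W
  have hWb : ∀ s ∈ Icc (0:ℝ) T, |w s| ≤ W := by
    intro s hs
    have hc : Continuous fun s : Set.Icc (0:ℝ) T => |w s.1| :=
      (continuousOn_iff_continuous_restrict.mp hw).abs
    rw [hWdef]
    exact le_ciSup (isCompact_range hc).bddAbove (⟨s, hs⟩ : Set.Icc (0:ℝ) T)
  have hW0 : 0 ≤ W := (abs_nonneg _).trans (hWb 0 ⟨le_refl 0, hT0⟩)
  have hεW : 0 ≤ ε * W := mul_nonneg hε.le hW0
  have hFd : Differentiable ℝ (fun p : ℝ × ℝ => S p.1 p.2) := hS2.differentiable two_ne_zero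
  have hFc : Continuous (fun p : ℝ × ℝ => S p.1 p.2) := hS2.continuous
  have hSc2 : Continuous (fun s => S s (x (s - τ))) :=
    hFc.comp (continuous_id.prodMk (hx.comp (continuous_id.sub continuous_const)))
  have hScX : Continuous (fun s => S s (X (s - τ))) :=
    hFc.comp (continuous_id.prodMk (hX.comp (continuous_id.sub continuous_const)))
  have hSabs : ∀ t y : ℝ, |S t y| ≤ B := fun t y =>
    abs_le.mpr ⟨by linarith [hSα t y], hSB t y⟩
  -- ## facts about x
  have hxInt : ∀ c d : ℝ, IntervalIntegrable (fun s => S s (x (s - τ))) volume c d :=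
    fun c d => hSc2.intervalIntegrable c d
  have hXInt : ∀ c d : ℝ, IntervalIntegrable (fun s => S s (X (s - τ))) volume c d :=
    fun c d => hScX.intervalIntegrable c d
  have hxdiff : ∀ r ∈ Ioo (0:ℝ) T, HasDerivAt x (S r (x (r - τ))) r := by
    intro r hr
    have h1 : HasDerivAt (fun t => x₀ + ∫ s in (0:ℝ)..t, S s (x (s - τ)))
        (S r (x (r - τ))) r :=
      ((hSc2.integral_hasStrictDerivAt 0 r).hasDerivAt).const_add x₀
    apply h1.congr_of_eventuallyEq
    filter_upwards [Ioo_mem_nhds hr.1 hr.2] with t ht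
    exact hxeq t ⟨ht.1.le, ht.2.le⟩
  have hxsub : ∀ c ∈ Icc (0:ℝ) T, ∀ d ∈ Icc (0:ℝ) T,
      x d - x c = ∫ s in c..d, S s (x (s - τ)) := by
    intro c hc d hd
    rw [hxeq d hd, hxeq c hc]
    have h1 := intervalIntegral.integral_add_adjacent_intervals (hxInt 0 c) (hxInt c d)
    linarith
  have hxLip : ∀ c ∈ Icc (0:ℝ) T, ∀ d ∈ Icc (0:ℝ) T, |x d - x c| ≤ B * |d - c| := by
    intro c hc d hd
    rw [hxsub c hc d hd]
    have h1 := intervalIntegral.norm_integral_le_of_norm_le_const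
      (C := B) (f := fun s => S s (x (s - τ))) (a := c) (b := d)
      (fun s _ => by simpa using hSabs s (x (s - τ)))
    rw [Real.norm_eq_abs] at h1
    exact h1
  have hxgrow : ∀ c ∈ Icc (0:ℝ) T, ∀ d ∈ Icc (0:ℝ) T, c ≤ d →
      α * (d - c) ≤ x d - x c := by
    intro c hc d hd hcd
    rw [hxsub c hc d hd]
    have h1 : ∫ s in c..d, α ≤ ∫ s in c..d, S s (x (s - τ)) :=
      intervalIntegral.integral_mono_on hcd intervalIntegrable_const (hxInt c d)
        (fun s _ => hSα s _)
    simpa [smul_eq_mul, mul_comm] using h1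
  -- ## Gronwall closeness of X and x
  have hlipY : ∀ t y y' : ℝ, |S t y - S t y'| ≤ L * |y - y'| := aux_lipY hFd h6
  have hlipT : ∀ t t' y : ℝ, |S t y - S t' y| ≤ M * |t - t'| := aux_lipT hFd h5
  set D : ℝ → ℝ := fun t => |X t - x t| with hDdef
  clear_value D
  have hDc : Continuous D := by rw [hDdef]; exact (hX.sub hx).abs
  have hDnn : ∀ t, 0 ≤ D t := by
    intro t; simp only [hDdef]; exact abs_nonneg _
  have hD0 : ∀ t ≤ (0:ℝ), D t = 0 := fun t ht => by
    simp [hDdef, hx0 t ht, hX0 t ht]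
  have hDInt : ∀ c d : ℝ, IntervalIntegrable D volume c d := fun c d =>
    hDc.intervalIntegrable c d
  have hDbound : ∀ t ∈ Icc (0:ℝ) T, D t ≤ L * (∫ s in (0:ℝ)..t, D s) + ε * W := by
    intro t ht
    have heq : X t - x t = (∫ s in (0:ℝ)..t, (S s (X (s - τ)) - S s (x (s - τ)))) + ε * w t := by
      rw [hXeq t ht, hxeq t ht, intervalIntegral.integral_sub (hXInt 0 t) (hxInt 0 t)]
      ring
    have h1 : |∫ s in (0:ℝ)..t, (S s (X (s - τ)) - S s (x (s - τ)))|
        ≤ ∫ s in (0:ℝ)..t, L * D (s - τ) := by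
      refine (intervalIntegral.abs_integral_le_integral_abs ht.1).trans ?_
      refine intervalIntegral.integral_mono_on ht.1
        (((hScX.sub hSc2).abs).intervalIntegrable 0 t)
        ((continuous_const.mul (hDc.comp (continuous_id.sub continuous_const))).intervalIntegrable 0 t)
        (fun s _ => ?_)
      simp only [hDdef]
      exact hlipY s (X (s - τ)) (x (s - τ))
    have h2 : ∫ s in (0:ℝ)..t, L * D (s - τ)
        = L * ∫ s in (0:ℝ)..t, D (s - τ) := intervalIntegral.integral_const_mul _ _
    have h3 : ∫ s in (0:ℝ)..t, D (s - τ) ≤ ∫ s in (0:ℝ)..t, D s := by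
      rw [intervalIntegral.integral_comp_sub_right D τ]
      have e1 := intervalIntegral.integral_add_adjacent_intervals
        (hDInt (0 - τ) 0) (hDInt 0 (t - τ))
      have e2 : ∫ s in (0 - τ)..(0:ℝ), D s = 0 := by
        have : EqOn D 0 (Set.uIcc (0 - τ) 0) := fun s hs => hD0 s
          (hs.2.trans (by simp [le_max_iff]; linarith))
        rw [intervalIntegral.integral_congr this]
        simp
      have e3 : ∫ s in (0:ℝ)..(t - τ), D s ≤ ∫ s in (0:ℝ)..t, D s := by
        have e4 := intervalIntegral.integral_add_adjacent_intervals
          (hDInt 0 (t - τ)) (hDInt (t - τ) t)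
        have e5 : 0 ≤ ∫ s in (t - τ)..t, D s :=
          intervalIntegral.integral_nonneg (by linarith) (fun s _ => hDnn s)
        linarith
      linarith
    have h4 : |ε * w t| ≤ ε * W := by
      rw [abs_mul, abs_of_pos hε]
      exact mul_le_mul_of_nonneg_left (hWb t ht) hε.le
    have h5' : D t ≤ |∫ s in (0:ℝ)..t, (S s (X (s - τ)) - S s (x (s - τ)))| + |ε * w t| := by
      simp only [hDdef]
      rw [heq]; exact abs_add_le _ _
    have h6' : L * (∫ s in (0:ℝ)..t, D (s - τ)) ≤ L * ∫ s in (0:ℝ)..t, D s :=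
      mul_le_mul_of_nonneg_left h3 hL.le
    linarith
  have hclose : ∀ t ∈ Icc (0:ℝ) T, |X t - x t| ≤ ε * W * EE := by
    intro t ht
    have h := aux_gronwall hL hεW hT0 hDc hDnn hDbound t ht
    simp only [hDdef] at h
    rw [hEEdef]
    exact h
  -- ## |t₁ - t₂| bound
  have ht₁m : t₁ - τ ∈ Icc (0:ℝ) T := ⟨by linarith [ht₁.1], by linarith [ht₁.2]⟩
  have ht₂m : t₂ - τ ∈ Icc (0:ℝ) T := ⟨by linarith [ht₂.1], by linarith [ht₂.2]⟩
  have hxx : |x (t₁ - τ) - x (t₂ - τ)| ≤ ε * W * EE := by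
    rw [hlevel]
    exact hclose _ ht₂m
  have ht12 : |t₁ - t₂| ≤ ε * W * EE / α := by
    rw [le_div_iff₀ hα]
    rcases le_total t₁ t₂ with hle | hle
    · have h1 := hxgrow (t₁ - τ) ht₁m (t₂ - τ) ht₂m (by linarith)
      have h2 : x (t₂ - τ) - x (t₁ - τ) ≤ |x (t₁ - τ) - x (t₂ - τ)| := by
        rw [abs_sub_comm]; exact le_abs_self _
      rw [abs_of_nonpos (by linarith : t₁ - t₂ ≤ 0)]
      nlinarith
    · have h1 := hxgrow (t₂ - τ) ht₂m (t₁ - τ) ht₁m (by linarith)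
      have h2 : x (t₁ - τ) - x (t₂ - τ) ≤ |x (t₁ - τ) - x (t₂ - τ)| := le_abs_self _
      rw [abs_of_nonneg (by linarith : 0 ≤ t₁ - t₂)]
      nlinarith
  -- ## reduction of the kernel integral
  have ha0 : 0 < t₂ - φ := by linarith
  have hΨint : ∀ c d : ℝ, IntervalIntegrable (fun s => G ((s - t₂) / φ)) volume c d :=
    fun c d => aux_affine_intervalIntegrable G hGint hφ.ne' t₂ c d
  have hΦint : ∀ c d : ℝ,
      IntervalIntegrable (fun s => G ((s - t₂) / φ) * S s (X (s - τ))) volume c d :=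
    fun c d => (hΨint c d).mul_continuousOn hScX.continuousOn
  have hz1 : ∫ s in (0:ℝ)..(t₂ - φ), G ((s - t₂) / φ) * S s (X (s - τ)) = 0 := by
    have hEq : EqOn (fun s => G ((s - t₂) / φ) * S s (X (s - τ))) 0 (Set.uIcc 0 (t₂ - φ)) := by
      intro s hs
      rw [Set.uIcc_of_le ha0.le] at hs
      have h1 : (s - t₂) / φ ≤ -1 := by
        rw [div_le_iff₀ hφ]
        linarith [hs.2]
      have h2 : (1:ℝ) ≤ |(s - t₂) / φ| := by
        rw [abs_of_nonpos (by linarith)]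
        linarith
      simp [hGsupp _ h2]
    rw [intervalIntegral.integral_congr hEq]
    simp
  have hz2 : ∫ s in (t₂ + φ)..T, G ((s - t₂) / φ) * S s (X (s - τ)) = 0 := by
    have hEq : EqOn (fun s => G ((s - t₂) / φ) * S s (X (s - τ))) 0 (Set.uIcc (t₂ + φ) T) := by
      intro s hs
      rw [Set.uIcc_of_le (by linarith)] at hs
      have h1 : (1:ℝ) ≤ (s - t₂) / φ := by
        rw [le_div_iff₀ hφ]
        linarith [hs.1]
      have h2 : (1:ℝ) ≤ |(s - t₂) / φ| := h1.trans (le_abs_self _)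
      simp [hGsupp _ h2]
    rw [intervalIntegral.integral_congr hEq]
    simp
  have hsplit : ∫ s in (0:ℝ)..T, G ((s - t₂) / φ) * S s (X (s - τ))
      = ∫ s in (t₂ - φ)..(t₂ + φ), G ((s - t₂) / φ) * S s (X (s - τ)) := by
    have e1 := intervalIntegral.integral_add_adjacent_intervals
      (hΦint 0 (t₂ - φ)) (hΦint (t₂ - φ) T)
    have e2 := intervalIntegral.integral_add_adjacent_intervals
      (hΦint (t₂ - φ) (t₂ + φ)) (hΦint (t₂ + φ) T)
    linarith
  have hchange : ∫ s in (t₂ - φ)..(t₂ + φ), G ((s - t₂) / φ) * S s (X (s - τ))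
      = φ * ∫ u in (-1:ℝ)..1, G u * S (t₂ + φ * u) (X (t₂ + φ * u - τ)) := by
    have hpt : ∀ s : ℝ, G ((s - t₂) / φ) * S s (X (s - τ))
        = (fun u => G u * S (t₂ + φ * u) (X (t₂ + φ * u - τ))) (s / φ - t₂ / φ) := by
      intro s
      have e : t₂ + φ * (s / φ - t₂ / φ) = s := by field_simp; ring
      show _ = G (s / φ - t₂ / φ) * S (t₂ + φ * (s / φ - t₂ / φ)) (X (t₂ + φ * (s / φ - t₂ / φ) - τ))
      rw [e, sub_div]
    calc ∫ s in (t₂ - φ)..(t₂ + φ), G ((s - t₂) / φ) * S s (X (s - τ))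
        = ∫ s in (t₂ - φ)..(t₂ + φ),
            (fun u => G u * S (t₂ + φ * u) (X (t₂ + φ * u - τ))) (s / φ - t₂ / φ) :=
          intervalIntegral.integral_congr (fun s _ => hpt s)
      _ = φ • ∫ u in ((t₂ - φ) / φ - t₂ / φ)..((t₂ + φ) / φ - t₂ / φ),
            G u * S (t₂ + φ * u) (X (t₂ + φ * u - τ)) :=
          intervalIntegral.integral_comp_div_sub (fun u => G u * S (t₂ + φ * u) (X (t₂ + φ * u - τ))) hφ.ne' (t₂ / φ)
      _ = φ * ∫ u in (-1:ℝ)..1, G u * S (t₂ + φ * u) (X (t₂ + φ * u - τ)) := by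
          have e1 : (t₂ - φ) / φ - t₂ / φ = -1 := by
            rw [div_sub_div_same, show t₂ - φ - t₂ = -φ by ring, neg_div, div_self hφ.ne']
          have e2 : (t₂ + φ) / φ - t₂ / φ = 1 := by
            rw [div_sub_div_same, show t₂ + φ - t₂ = φ by ring, div_self hφ.ne']
          rw [smul_eq_mul, e1, e2]
  have hker : (1 / φ) * (∫ s in (0:ℝ)..T, G ((s - t₂) / φ) * S s (X (s - τ)))
      = ∫ u in (-1:ℝ)..1, G u * S (t₂ + φ * u) (X (t₂ + φ * u - τ)) := by
    rw [hsplit, hchange]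
    field_simp
  -- ## derivative of the drift along the deterministic solution
  have hAlip := aux_fderiv_lip hS2 h11 h12 h22
  have hAnorm' := aux_fderiv_opnorm hS2 h5 h6
  have hAnorm : ∀ p : ℝ × ℝ, ‖fderiv ℝ (fun p : ℝ × ℝ => S p.1 p.2) p‖ ≤ M + L := by
    intro p
    have := hAnorm' p
    rwa [abs_of_pos hM, abs_of_pos hL] at this
  set A : ℝ × ℝ → (ℝ × ℝ) →L[ℝ] ℝ := fderiv ℝ (fun p : ℝ × ℝ => S p.1 p.2) with hAdef
  clear_value A
  set g' : ℝ → ℝ := fun s => A (s, x (s - τ)) (1, S (s - τ) (x (s - τ - τ))) with hg'def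
  clear_value g'
  have hgd : ∀ s ∈ Icc (t₂ - φ) (t₂ + φ),
      HasDerivAt (fun r => S r (x (r - τ))) (g' s) s := by
    intro s hs
    have hs1 : s - τ ∈ Ioo (0:ℝ) T := ⟨by linarith [hs.1], by linarith [hs.2]⟩
    have h1 : HasDerivAt (fun r => x (r - τ)) (S (s - τ) (x (s - τ - τ))) s := by
      have h2 := (hxdiff (s - τ) hs1).comp s ((hasDerivAt_id s).sub_const τ)
      simpa [Function.comp_def] using h2
    have hγ : HasDerivAt (fun r => (r, x (r - τ))) ((1:ℝ), S (s - τ) (x (s - τ - τ))) s :=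
      (hasDerivAt_id s).prodMk h1
    simp only [hg'def]
    rw [hAdef]
    exact (hFd (s, x (s - τ))).hasFDerivAt.comp_hasDerivAt s hγ
  have hg'lip : ∀ s ∈ Icc (t₂ - φ) (t₂ + φ), |g' s - g' t₂| ≤ Kg * |s - t₂| := by
    intro s hs
    have hsτ : s - τ ∈ Icc (0:ℝ) T := ⟨by linarith [hs.1], by linarith [hs.2]⟩
    have hs2τ : s - τ - τ ∈ Icc (0:ℝ) T := ⟨by linarith [hs.1], by linarith [hs.2]⟩
    have ht₂2τ : t₂ - τ - τ ∈ Icc (0:ℝ) T := ⟨by linarith, by linarith [ht₂.2]⟩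
    have hxs : |x (s - τ) - x (t₂ - τ)| ≤ B * |s - t₂| := by
      have := hxLip (t₂ - τ) ht₂m (s - τ) hsτ
      simpa [show s - τ - (t₂ - τ) = s - t₂ by ring] using this
    have hpq : ‖((s, x (s - τ)) : ℝ × ℝ) - (t₂, x (t₂ - τ))‖ ≤ (1 + B) * |s - t₂| := by
      rw [Prod.norm_def]
      apply max_le
      · simp only [Prod.fst_sub, Real.norm_eq_abs]
        have h := mul_nonneg hB.le (abs_nonneg (s - t₂))
        linarith
      · simp only [Prod.snd_sub, Real.norm_eq_abs]
        have h := abs_nonneg (s - t₂)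
        linarith [hxs]
    have hv : ‖((1:ℝ), S (s - τ) (x (s - τ - τ)))‖ ≤ 1 + B := by
      rw [Prod.norm_def]
      apply max_le
      · simp; linarith
      · simp only [Real.norm_eq_abs]
        linarith [hSabs (s - τ) (x (s - τ - τ))]
    have hδ : |S (s - τ) (x (s - τ - τ)) - S (t₂ - τ) (x (t₂ - τ - τ))|
        ≤ (M + L * B) * |s - t₂| := by
      have h1 := abs_sub_le (S (s - τ) (x (s - τ - τ))) (S (t₂ - τ) (x (s - τ - τ)))
        (S (t₂ - τ) (x (t₂ - τ - τ)))
      have h2 := hlipT (s - τ) (t₂ - τ) (x (s - τ - τ))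
      have h3 := hlipY (t₂ - τ) (x (s - τ - τ)) (x (t₂ - τ - τ))
      have h4 : |x (s - τ - τ) - x (t₂ - τ - τ)| ≤ B * |s - t₂| := by
        have := hxLip (t₂ - τ - τ) ht₂2τ (s - τ - τ) hs2τ
        simpa [show s - τ - τ - (t₂ - τ - τ) = s - t₂ by ring] using this
      have h5' : |s - τ - (t₂ - τ)| = |s - t₂| := by rw [show s - τ - (t₂ - τ) = s - t₂ by ring]
      rw [h5'] at h2
      linarith [mul_le_mul_of_nonneg_left h4 hL.le, h1, h2, h3]
    have hvv' : ‖((1:ℝ), S (s - τ) (x (s - τ - τ))) - ((1:ℝ), S (t₂ - τ) (x (t₂ - τ - τ)))‖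
        ≤ (M + L * B) * |s - t₂| := by
      rw [Prod.norm_def]
      apply max_le
      · simp only [Prod.fst_sub, sub_self, norm_zero]
        have hMLB : (0:ℝ) < M + L * B := add_pos hM (mul_pos hL hB)
        exact mul_nonneg hMLB.le (abs_nonneg _)
      · simpa only [Prod.snd_sub, Real.norm_eq_abs] using hδ
    have hsplit2 : g' s - g' t₂ =
        (A (s, x (s - τ)) - A (t₂, x (t₂ - τ))) (1, S (s - τ) (x (s - τ - τ)))
        + (A (t₂, x (t₂ - τ)))
            (((1:ℝ), S (s - τ) (x (s - τ - τ))) - ((1:ℝ), S (t₂ - τ) (x (t₂ - τ - τ)))) := by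
      simp only [hg'def, ContinuousLinearMap.sub_apply, map_sub]
      ring
    have c1 : ‖A (s, x (s - τ)) - A (t₂, x (t₂ - τ))‖ ≤ 4 * |M₂| * ((1 + B) * |s - t₂|) := by
      refine (hAlip _ _).trans ?_
      exact mul_le_mul_of_nonneg_left hpq (by positivity)
    have c2 : ‖(A (s, x (s - τ)) - A (t₂, x (t₂ - τ))) (1, S (s - τ) (x (s - τ - τ)))‖
        ≤ (4 * |M₂| * ((1 + B) * |s - t₂|)) * (1 + B) := by
      refine ((A (s, x (s - τ)) - A (t₂, x (t₂ - τ))).le_opNorm _).trans ?_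
      exact mul_le_mul c1 hv (norm_nonneg _) (by positivity)
    have c3 : ‖(A (t₂, x (t₂ - τ)))
        (((1:ℝ), S (s - τ) (x (s - τ - τ))) - ((1:ℝ), S (t₂ - τ) (x (t₂ - τ - τ))))‖
        ≤ (M + L) * ((M + L * B) * |s - t₂|) := by
      refine ((A (t₂, x (t₂ - τ))).le_opNorm _).trans ?_
      exact mul_le_mul (hAnorm _) hvv' (norm_nonneg _) (by linarith)
    have c4 : |g' s - g' t₂| ≤
        ‖(A (s, x (s - τ)) - A (t₂, x (t₂ - τ))) (1, S (s - τ) (x (s - τ - τ)))‖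
        + ‖(A (t₂, x (t₂ - τ)))
            (((1:ℝ), S (s - τ) (x (s - τ - τ))) - ((1:ℝ), S (t₂ - τ) (x (t₂ - τ - τ))))‖ := by
      rw [hsplit2]
      exact (abs_add_le _ _).trans (by rw [Real.norm_eq_abs, Real.norm_eq_abs])
    have c5 : |g' s - g' t₂| ≤ 4 * |M₂| * ((1 + B) * |s - t₂|) * (1 + B)
        + (M + L) * ((M + L * B) * |s - t₂|) := c4.trans (add_le_add c2 c3)
    rw [hKgdef]
    refine c5.trans (le_of_eq (by ring))
  -- ## Taylor estimate
  have htay : ∀ u ∈ Icc (-1:ℝ) 1,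
      |S (t₂ + φ * u) (x (t₂ + φ * u - τ)) - S t₂ (x (t₂ - τ)) - φ * u * g' t₂|
        ≤ Kg * φ ^ 2 := by
    intro u hu
    have hmem1 : t₂ ∈ Icc (t₂ - φ) (t₂ + φ) := ⟨by linarith, by linarith⟩
    have hmem2 : t₂ + φ * u ∈ Icc (t₂ - φ) (t₂ + φ) := by
      constructor
      · have h := mul_le_mul_of_nonneg_left hu.1 hφ.le
        linarith
      · have h := mul_le_mul_of_nonneg_left hu.2 hφ.le
        linarith
    have hh : ∀ s ∈ Icc (t₂ - φ) (t₂ + φ),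
        HasDerivWithinAt (fun r => S r (x (r - τ)) - (r - t₂) * g' t₂)
          (g' s - g' t₂) (Icc (t₂ - φ) (t₂ + φ)) s := by
      intro s hs
      have h1 := (hgd s hs).sub (((hasDerivAt_id s).sub_const t₂).mul_const (g' t₂))
      simpa [Pi.sub_def] using h1.hasDerivWithinAt
    have hbd : ∀ s ∈ Icc (t₂ - φ) (t₂ + φ), ‖g' s - g' t₂‖ ≤ Kg * φ := by
      intro s hs
      rw [Real.norm_eq_abs]
      refine (hg'lip s hs).trans ?_
      have : |s - t₂| ≤ φ := abs_le.mpr ⟨by linarith [hs.1], by linarith [hs.2]⟩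
      exact mul_le_mul_of_nonneg_left this hKg0
    have hmvt := (convex_Icc (t₂ - φ) (t₂ + φ)).norm_image_sub_le_of_norm_hasDerivWithin_le
      hh hbd hmem1 hmem2
    rw [Real.norm_eq_abs, Real.norm_eq_abs] at hmvt
    have he1 : (S (t₂ + φ * u) (x (t₂ + φ * u - τ)) - (t₂ + φ * u - t₂) * g' t₂)
        - (S t₂ (x (t₂ - τ)) - (t₂ - t₂) * g' t₂)
        = S (t₂ + φ * u) (x (t₂ + φ * u - τ)) - S t₂ (x (t₂ - τ)) - φ * u * g' t₂ := by
      ring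
    rw [he1] at hmvt
    have he2 : |t₂ + φ * u - t₂| = φ * |u| := by
      rw [show t₂ + φ * u - t₂ = φ * u by ring, abs_mul, abs_of_pos hφ]
    rw [he2] at hmvt
    have hu1 : |u| ≤ 1 := abs_le.mpr ⟨hu.1, hu.2⟩
    have hstep : Kg * φ * (φ * |u|) ≤ Kg * φ * (φ * 1) :=
      mul_le_mul_of_nonneg_left (mul_le_mul_of_nonneg_left hu1 hφ.le)
        (mul_nonneg hKg0 hφ.le)
    refine hmvt.trans (hstep.trans (le_of_eq (by ring)))
  -- ## decomposition of the kernel average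
  have hmemτ : ∀ u ∈ Icc (-1:ℝ) 1, t₂ + φ * u - τ ∈ Icc (0:ℝ) T := by
    intro u hu
    constructor
    · have h := mul_le_mul_of_nonneg_left hu.1 hφ.le
      linarith
    · have h := mul_le_mul_of_nonneg_left hu.2 hφ.le
      linarith
  have hIb1 : ∀ u ∈ Icc (-1:ℝ) 1,
      |S (t₂ + φ * u) (X (t₂ + φ * u - τ)) - S (t₂ + φ * u) (x (t₂ + φ * u - τ))|
        ≤ L * (ε * W * EE) := by
    intro u hu
    have h1 := hlipY (t₂ + φ * u) (X (t₂ + φ * u - τ)) (x (t₂ + φ * u - τ))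
    have h2 := hclose (t₂ + φ * u - τ) (hmemτ u hu)
    calc |S (t₂ + φ * u) (X (t₂ + φ * u - τ)) - S (t₂ + φ * u) (x (t₂ + φ * u - τ))|
        ≤ L * |X (t₂ + φ * u - τ) - x (t₂ + φ * u - τ)| := h1
      _ ≤ L * (ε * W * EE) := mul_le_mul_of_nonneg_left h2 hL.le
  have hGI : IntervalIntegrable G volume (-1) 1 := hGint.intervalIntegrable
  have hcont1 : Continuous fun u : ℝ => S (t₂ + φ * u) (X (t₂ + φ * u - τ)) :=
    hScX.comp (continuous_const.add (continuous_const.mul continuous_id))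
  have hcont2 : Continuous fun u : ℝ => S (t₂ + φ * u) (x (t₂ + φ * u - τ)) :=
    hSc2.comp (continuous_const.add (continuous_const.mul continuous_id))
  have hI₁int : IntervalIntegrable (fun u =>
      G u * (S (t₂ + φ * u) (X (t₂ + φ * u - τ)) - S (t₂ + φ * u) (x (t₂ + φ * u - τ))))
      volume (-1) 1 :=
    hGI.mul_continuousOn (hcont1.sub hcont2).continuousOn
  have hI₂int : IntervalIntegrable (fun u =>
      G u * (S (t₂ + φ * u) (x (t₂ + φ * u - τ)) - S t₂ (x (t₂ - τ)) - φ * u * g' t₂))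
      volume (-1) 1 :=
    hGI.mul_continuousOn (((hcont2.sub continuous_const).sub
      ((continuous_const.mul continuous_id).mul continuous_const)).continuousOn)
  have hI₃int : IntervalIntegrable (fun u => G u * S t₂ (x (t₂ - τ))) volume (-1) 1 :=
    hGI.mul_const _
  have hI₄int : IntervalIntegrable (fun u : ℝ => u * G u * (φ * g' t₂)) volume (-1) 1 :=
    (hGI.continuousOn_mul continuousOn_id).mul_const _
  have hdecomp : ∀ u : ℝ, G u * S (t₂ + φ * u) (X (t₂ + φ * u - τ))
      = G u * (S (t₂ + φ * u) (X (t₂ + φ * u - τ)) - S (t₂ + φ * u) (x (t₂ + φ * u - τ)))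
      + G u * (S (t₂ + φ * u) (x (t₂ + φ * u - τ)) - S t₂ (x (t₂ - τ)) - φ * u * g' t₂)
      + G u * S t₂ (x (t₂ - τ)) + u * G u * (φ * g' t₂) := by
    intro u; ring
  have hsum : ∫ u in (-1:ℝ)..1, G u * S (t₂ + φ * u) (X (t₂ + φ * u - τ))
      = (∫ u in (-1:ℝ)..1,
          G u * (S (t₂ + φ * u) (X (t₂ + φ * u - τ)) - S (t₂ + φ * u) (x (t₂ + φ * u - τ))))
        + (∫ u in (-1:ℝ)..1,
          G u * (S (t₂ + φ * u) (x (t₂ + φ * u - τ)) - S t₂ (x (t₂ - τ)) - φ * u * g' t₂))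
        + S t₂ (x (t₂ - τ)) := by
    simp only [hdecomp]
    rw [intervalIntegral.integral_add ((hI₁int.add hI₂int).add hI₃int) hI₄int,
      intervalIntegral.integral_add (hI₁int.add hI₂int) hI₃int,
      intervalIntegral.integral_add hI₁int hI₂int,
      intervalIntegral.integral_mul_const, hG1,
      intervalIntegral.integral_mul_const, hG2]
    ring
  have hb₁ : |∫ u in (-1:ℝ)..1,
      G u * (S (t₂ + φ * u) (X (t₂ + φ * u - τ)) - S (t₂ + φ * u) (x (t₂ + φ * u - τ)))|
      ≤ Γ * (L * (ε * W * EE)) := by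
    have h1 := intervalIntegral.abs_integral_le_integral_abs (μ := volume) (a := (-1:ℝ)) (b := 1)
      (f := fun u => G u * (S (t₂ + φ * u) (X (t₂ + φ * u - τ))
        - S (t₂ + φ * u) (x (t₂ + φ * u - τ)))) (by norm_num)
    have h2 : ∫ u in (-1:ℝ)..1, |G u * (S (t₂ + φ * u) (X (t₂ + φ * u - τ))
        - S (t₂ + φ * u) (x (t₂ + φ * u - τ)))|
        ≤ ∫ u in (-1:ℝ)..1, |G u| * (L * (ε * W * EE)) := by
      refine intervalIntegral.integral_mono_on (by norm_num) hI₁int.abs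
        (hGI.abs.mul_const _) (fun u hu => ?_)
      rw [abs_mul]
      exact mul_le_mul_of_nonneg_left (hIb1 u hu) (abs_nonneg _)
    have h3 : ∫ u in (-1:ℝ)..1, |G u| * (L * (ε * W * EE)) = Γ * (L * (ε * W * EE)) := by
      rw [hΓdef]; exact intervalIntegral.integral_mul_const _ _
    linarith
  have hb₂ : |∫ u in (-1:ℝ)..1,
      G u * (S (t₂ + φ * u) (x (t₂ + φ * u - τ)) - S t₂ (x (t₂ - τ)) - φ * u * g' t₂)|
      ≤ Γ * (Kg * φ ^ 2) := by
    have h1 := intervalIntegral.abs_integral_le_integral_abs (μ := volume) (a := (-1:ℝ)) (b := 1)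
      (f := fun u => G u * (S (t₂ + φ * u) (x (t₂ + φ * u - τ))
        - S t₂ (x (t₂ - τ)) - φ * u * g' t₂)) (by norm_num)
    have h2 : ∫ u in (-1:ℝ)..1, |G u * (S (t₂ + φ * u) (x (t₂ + φ * u - τ))
        - S t₂ (x (t₂ - τ)) - φ * u * g' t₂)|
        ≤ ∫ u in (-1:ℝ)..1, |G u| * (Kg * φ ^ 2) := by
      refine intervalIntegral.integral_mono_on (by norm_num) hI₂int.abs
        (hGI.abs.mul_const _) (fun u hu => ?_)
      rw [abs_mul]
      exact mul_le_mul_of_nonneg_left (htay u hu) (abs_nonneg _)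
    have h3 : ∫ u in (-1:ℝ)..1, |G u| * (Kg * φ ^ 2) = Γ * (Kg * φ ^ 2) := by
      rw [hΓdef]; exact intervalIntegral.integral_mul_const _ _
    linarith
  have hb₃ : |S t₂ (x (t₂ - τ)) - S t₁ (x (t₁ - τ))| ≤ (M / α + L) * EE * (ε * W) := by
    have h1 := hlipT t₂ t₁ (x (t₂ - τ))
    have h2 := hlipY t₁ (x (t₂ - τ)) (x (t₁ - τ))
    have h3 := abs_sub_le (S t₂ (x (t₂ - τ))) (S t₁ (x (t₂ - τ))) (S t₁ (x (t₁ - τ)))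
    have h4 : |t₂ - t₁| ≤ ε * W * EE / α := by rw [abs_sub_comm]; exact ht12
    have h5' : |x (t₂ - τ) - x (t₁ - τ)| ≤ ε * W * EE := by rw [abs_sub_comm]; exact hxx
    have he : (M / α + L) * EE * (ε * W) = M * (ε * W * EE / α) + L * (ε * W * EE) := by
      field_simp
    rw [he]
    linarith [mul_le_mul_of_nonneg_left h4 hM.le, mul_le_mul_of_nonneg_left h5' hL.le,
      h1, h2, h3]
  -- ## final assembly
  rw [hker]
  have hfin : (∫ u in (-1:ℝ)..1, G u * S (t₂ + φ * u) (X (t₂ + φ * u - τ)))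
      - S t₁ (x (t₁ - τ))
      = (∫ u in (-1:ℝ)..1,
          G u * (S (t₂ + φ * u) (X (t₂ + φ * u - τ)) - S (t₂ + φ * u) (x (t₂ + φ * u - τ))))
        + (∫ u in (-1:ℝ)..1,
          G u * (S (t₂ + φ * u) (x (t₂ + φ * u - τ)) - S t₂ (x (t₂ - τ)) - φ * u * g' t₂))
        + (S t₂ (x (t₂ - τ)) - S t₁ (x (t₁ - τ))) := by
    rw [hsum]; ring
  rw [hfin]
  have habs : |(∫ u in (-1:ℝ)..1,
          G u * (S (t₂ + φ * u) (X (t₂ + φ * u - τ)) - S (t₂ + φ * u) (x (t₂ + φ * u - τ))))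
        + (∫ u in (-1:ℝ)..1,
          G u * (S (t₂ + φ * u) (x (t₂ + φ * u - τ)) - S t₂ (x (t₂ - τ)) - φ * u * g' t₂))
        + (S t₂ (x (t₂ - τ)) - S t₁ (x (t₁ - τ)))|
      ≤ Γ * (L * (ε * W * EE)) + Γ * (Kg * φ ^ 2) + (M / α + L) * EE * (ε * W) := by
    refine ((abs_add_le _ _).trans ?_)
    have := (abs_add_le (∫ u in (-1:ℝ)..1,
          G u * (S (t₂ + φ * u) (X (t₂ + φ * u - τ)) - S (t₂ + φ * u) (x (t₂ + φ * u - τ))))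
      (∫ u in (-1:ℝ)..1,
          G u * (S (t₂ + φ * u) (x (t₂ + φ * u - τ)) - S t₂ (x (t₂ - τ)) - φ * u * g' t₂)))
    linarith
  refine habs.trans ?_
  have e : (Γ * (L * EE) + Γ * Kg + (M / α + L) * EE + 1) * (φ ^ 2 + ε * W)
      = Γ * (L * (ε * W * EE)) + Γ * (Kg * φ ^ 2) + (M / α + L) * EE * (ε * W)
        + (Γ * (L * EE) * φ ^ 2 + Γ * Kg * (ε * W) + (M / α + L) * EE * φ ^ 2
          + (φ ^ 2 + ε * W)) := by ring
  rw [e]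
  linarith [mul_nonneg (mul_nonneg (mul_nonneg hΓ0 hL.le) hEE.le) (sq_nonneg φ),
    mul_nonneg (mul_nonneg hΓ0 hKg0) hεW,
    mul_nonneg (mul_nonneg hMα.le hEE.le) (sq_nonneg φ),
    sq_nonneg φ, hεW]
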